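/- arXiv:0708.2271 — 2 statements merged into one kernel-verified Lean document; each statement's English description precedes it below -/
import Mathlib

section
/- Under the same hypotheses, the Darboux transform $v_2 = u_2' - \frac{g_0'}{g_0} u_2$ of the second SPPS solution $u_2 = g_0 \sum_{\text{odd } n} \frac{\omega^n}{n!} X^{(n)}$ equals $\frac{\omega}{g_0} \sum_{\text{even } n \geq 0} \frac{\omega^n}{n!} X^{(n)}$; consequently the general solution of $-v'' + (r + \omega^2) v = 0$ with $r = 2(g_0'/g_0)^2 - q$ is $v = \frac{c_1}{g_0} \sum_{\text{even } n} \frac{\omega^n}{n!} X^{(n)} + \frac{c_2}{g_0} \sum_{\text{odd } n} \frac{\omega^n}{n!} \widetilde{X}^{(n)}$. -/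
open scoped Nat

/-- The SPPS recursive integrals: `spps wodd weven 0 ≡ 1` and
`spps wodd weven n x = n ∫₀ˣ spps wodd weven (n-1) · w`, where the weight `w`
is `wodd` when `n` is odd and `weven` when `n` is even. -/
noncomputable def spps (wodd weven : ℝ → ℂ) : ℕ → ℝ → ℂ
  | 0 => fun _ => 1
  | n + 1 => fun x => (n + 1 : ℂ) *
      ∫ t in (0:ℝ)..x,
        spps wodd weven n t * (if (n + 1) % 2 = 1 then wodd t else weven t)

open Set intervalIntegral Filter Topology

section helpers

lemma uIcc_sub {a b : ℝ} (ha : a < 0) (hb : 0 < b) {x : ℝ} (hx : x ∈ Set.Ioo a b) :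
    Set.uIcc 0 x ⊆ Set.Ioo a b :=
  Set.ordConnected_Ioo.uIcc_subset ⟨ha, hb⟩ hx

/-- weight at step n -/
noncomputable def sw (w1 w2 : ℝ → ℂ) (n : ℕ) : ℝ → ℂ := fun t =>
  if n % 2 = 1 then w1 t else w2 t

lemma sw_cont {a b : ℝ} {w1 w2 : ℝ → ℂ}
    (hw1 : ContinuousOn w1 (Set.Ioo a b)) (hw2 : ContinuousOn w2 (Set.Ioo a b)) (n : ℕ) :
    ContinuousOn (sw w1 w2 n) (Set.Ioo a b) := by
  unfold sw; split
  · exact hw1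
  · exact hw2

lemma spps_cont_and_deriv {a b : ℝ} (ha : a < 0) (hb : 0 < b) {w1 w2 : ℝ → ℂ}
    (hw1 : ContinuousOn w1 (Set.Ioo a b)) (hw2 : ContinuousOn w2 (Set.Ioo a b)) (n : ℕ) :
    ContinuousOn (spps w1 w2 n) (Set.Ioo a b) ∧
    ∀ x ∈ Set.Ioo a b, HasDerivAt (spps w1 w2 (n + 1))
      (((n : ℂ) + 1) * (spps w1 w2 n x * sw w1 w2 (n + 1) x)) x := by
  induction n with
  | zero =>
    constructor
    · exact continuousOn_const
    · intro x hx
      have hcont : ContinuousOn (fun t => spps w1 w2 0 t * sw w1 w2 1 t) (Set.Ioo a b) := by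
        exact continuousOn_const.mul (sw_cont hw1 hw2 1)
      have h1 : IntervalIntegrable (fun t => spps w1 w2 0 t * sw w1 w2 1 t) MeasureTheory.volume 0 x :=
        (hcont.mono (uIcc_sub ha hb hx)).intervalIntegrable
      have h2 := (intervalIntegral.integral_hasDerivAt_right h1
        (hcont.stronglyMeasurableAtFilter isOpen_Ioo x hx)
        (hcont.continuousAt (isOpen_Ioo.mem_nhds hx)))
      have h3 := h2.const_mul ((0 : ℂ) + 1)
      convert h3 using 1
      · rfl
      · ext y; show ((0:ℕ) + 1 : ℂ) * _ = _
        norm_num [sw]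
      · ring
  | succ n ih =>
    have hcn1 : ContinuousOn (spps w1 w2 (n + 1)) (Set.Ioo a b) := fun x hx =>
      ((ih.2 x hx).continuousAt.continuousWithinAt)
    refine ⟨hcn1, ?_⟩
    intro x hx
    have hcont : ContinuousOn (fun t => spps w1 w2 (n+1) t * sw w1 w2 (n+2) t) (Set.Ioo a b) :=
      hcn1.mul (sw_cont hw1 hw2 (n+2))
    have h1 : IntervalIntegrable (fun t => spps w1 w2 (n+1) t * sw w1 w2 (n+2) t)
        MeasureTheory.volume 0 x :=
      (hcont.mono (uIcc_sub ha hb hx)).intervalIntegrable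
    have h2 := (intervalIntegral.integral_hasDerivAt_right h1
      (hcont.stronglyMeasurableAtFilter isOpen_Ioo x hx)
      (hcont.continuousAt (isOpen_Ioo.mem_nhds hx)))
    have h3 := h2.const_mul ((n : ℂ) + 1 + 1)
    convert h3 using 1
    · rfl
    · ext y
      simp only [spps, sw]
      push_cast
      ring
    · push_cast
      ring

end helpers

lemma integral_abs_pow (n : ℕ) (x : ℝ) :
    |∫ t in (0:ℝ)..x, |t| ^ n| = |x| ^ (n + 1) / (n + 1) := by
  rcases le_or_gt 0 x with hx | hx
  · have h : ∫ t in (0:ℝ)..x, |t| ^ n = ∫ t in (0:ℝ)..x, t ^ n := by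
      apply intervalIntegral.integral_congr
      intro t ht
      rw [Set.uIcc_of_le hx] at ht
      show |t| ^ n = t ^ n
      rw [abs_of_nonneg ht.1]
    rw [h, integral_pow, zero_pow (Nat.succ_ne_zero n), sub_zero, abs_of_nonneg hx,
      abs_of_nonneg (by positivity : (0:ℝ) ≤ x ^ (n+1) / ((n:ℝ)+1))]
  · have h : ∫ t in (0:ℝ)..x, |t| ^ n = ∫ t in (0:ℝ)..x, (-t) ^ n := by
      apply intervalIntegral.integral_congr
      intro t ht
      rw [Set.uIcc_of_ge hx.le] at ht
      show |t| ^ n = (-t) ^ n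
      rw [abs_of_nonpos ht.2]
    have h2 : (∫ t in (0:ℝ)..x, (-t) ^ n) = ∫ t in (-x)..(-0 : ℝ), t ^ n :=
      intervalIntegral.integral_comp_neg (fun t => t ^ n)
    have hnx : (0:ℝ) ≤ (-x) ^ (n+1) := pow_nonneg (neg_nonneg.mpr hx.le) _
    rw [h, h2, integral_pow, neg_zero, zero_pow (Nat.succ_ne_zero n), zero_sub,
      abs_div, abs_neg, abs_of_nonneg hnx, abs_of_nonneg (by positivity : (0:ℝ) ≤ (n:ℝ)+1),
      abs_of_neg hx]

lemma sw_norm_le {a b B : ℝ} {w1 w2 : ℝ → ℂ}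
    (hB1 : ∀ t ∈ Set.Ioo a b, ‖w1 t‖ ≤ B) (hB2 : ∀ t ∈ Set.Ioo a b, ‖w2 t‖ ≤ B)
    (n : ℕ) {t : ℝ} (ht : t ∈ Set.Ioo a b) : ‖sw w1 w2 n t‖ ≤ B := by
  unfold sw; split
  · exact hB1 t ht
  · exact hB2 t ht

lemma spps_norm_le {a b : ℝ} (ha : a < 0) (hb : 0 < b) {w1 w2 : ℝ → ℂ}
    (hw1 : ContinuousOn w1 (Set.Ioo a b)) (hw2 : ContinuousOn w2 (Set.Ioo a b))
    {B : ℝ} (hB1 : ∀ t ∈ Set.Ioo a b, ‖w1 t‖ ≤ B) (hB2 : ∀ t ∈ Set.Ioo a b, ‖w2 t‖ ≤ B)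
    (n : ℕ) : ∀ x ∈ Set.Ioo a b, ‖spps w1 w2 n x‖ ≤ B ^ n * |x| ^ n := by
  have hB0 : 0 ≤ B := le_trans (norm_nonneg _) (hB1 0 ⟨ha, hb⟩)
  induction n with
  | zero => intro x hx; simp [spps]
  | succ n ih =>
    intro x hx
    have hsub : Set.uIoc 0 x ⊆ Set.Ioo a b :=
      Set.Ioc_subset_Icc_self.trans (uIcc_sub ha hb hx)
    have key : ‖∫ t in (0:ℝ)..x, spps w1 w2 n t * sw w1 w2 (n+1) t‖ ≤
        |∫ t in (0:ℝ)..x, B ^ (n+1) * |t| ^ n| := by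
      apply intervalIntegral.norm_integral_le_abs_of_norm_le
      · apply MeasureTheory.ae_restrict_of_forall_mem measurableSet_uIoc
        intro t ht
        have htab := hsub ht
        calc ‖spps w1 w2 n t * sw w1 w2 (n+1) t‖
            = ‖spps w1 w2 n t‖ * ‖sw w1 w2 (n+1) t‖ := norm_mul _ _
          _ ≤ (B ^ n * |t| ^ n) * B := by
              apply mul_le_mul (ih t htab) (sw_norm_le hB1 hB2 (n+1) htab) (norm_nonneg _)
              positivity
          _ = B ^ (n+1) * |t| ^ n := by ring
      · exact ((continuous_const.mul ((continuous_abs.pow n))).intervalIntegrable 0 x)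
    have hconst : (∫ t in (0:ℝ)..x, B ^ (n+1) * |t| ^ n) = B ^ (n+1) * ∫ t in (0:ℝ)..x, |t| ^ n :=
      intervalIntegral.integral_const_mul _ _
    have habs : |∫ t in (0:ℝ)..x, B ^ (n+1) * |t| ^ n| = B ^ (n+1) * (|x| ^ (n+1) / (n+1)) := by
      rw [hconst, abs_mul, integral_abs_pow, abs_of_nonneg (by positivity : (0:ℝ) ≤ B ^ (n+1))]
    show ‖((n:ℂ) + 1) * _‖ ≤ _
    rw [norm_mul]
    have hn : ‖((n:ℂ) + 1)‖ = (n : ℝ) + 1 := by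
      rw [show ((n:ℂ) + 1) = ((n+1 : ℕ) : ℂ) by push_cast; ring, Complex.norm_natCast]
      push_cast; ring
    rw [hn]
    calc ((n:ℝ) + 1) * ‖∫ t in (0:ℝ)..x, spps w1 w2 n t * sw w1 w2 (n+1) t‖
        ≤ ((n:ℝ) + 1) * (B ^ (n+1) * (|x| ^ (n+1) / (n+1))) := by
          rw [← habs]; exact mul_le_mul_of_nonneg_left key (by positivity)
      _ = B ^ (n+1) * |x| ^ (n+1) := by field_simp
section series

variable {a b : ℝ} {w1 w2 : ℝ → ℂ} {B : ℝ} (ω : ℂ)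

noncomputable def feT (w1 w2 : ℝ → ℂ) (ω : ℂ) (k : ℕ) (y : ℝ) : ℂ :=
  ω ^ (2 * k) / ((2 * k)! : ℂ) * spps w1 w2 (2 * k) y

noncomputable def foT (w1 w2 : ℝ → ℂ) (ω : ℂ) (k : ℕ) (y : ℝ) : ℂ :=
  ω ^ (2 * k + 1) / ((2 * k + 1)! : ℂ) * spps w1 w2 (2 * k + 1) y

noncomputable def geT (w1 w2 : ℝ → ℂ) (ω : ℂ) (k : ℕ) (y : ℝ) : ℂ :=
  ω ^ (2 * k) / ((2 * k)! : ℂ) * (((2 * k : ℕ) : ℂ) * (spps w1 w2 (2 * k - 1) y * w2 y))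

noncomputable def goT (w1 w2 : ℝ → ℂ) (ω : ℂ) (k : ℕ) (y : ℝ) : ℂ :=
  ω ^ (2 * k + 1) / ((2 * k + 1)! : ℂ) * (((2 * k + 1 : ℕ) : ℂ) * (spps w1 w2 (2 * k) y * w1 y))

lemma shift_alg (ωc p N F s w : ℂ) (hN : N ≠ 0) (hF : F ≠ 0) :
    p * ωc / (N * F) * (N * (s * w)) = ωc * w * (p / F * s) := by
  field_simp

lemma hasDerivAt_feT (ha : a < 0) (hb : 0 < b)
    (hw1 : ContinuousOn w1 (Set.Ioo a b)) (hw2 : ContinuousOn w2 (Set.Ioo a b))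
    (k : ℕ) {x : ℝ} (hx : x ∈ Set.Ioo a b) :
    HasDerivAt (feT w1 w2 ω k) (geT w1 w2 ω k x) x := by
  cases k with
  | zero =>
    have hfun : feT w1 w2 ω 0 = fun _ => ω ^ (2 * 0) / ((2 * 0)! : ℂ) := by
      funext y; simp [feT, spps]
    have hval : geT w1 w2 ω 0 x = 0 := by simp [geT]
    rw [hfun, hval]
    exact hasDerivAt_const x _
  | succ m =>
    have h := (spps_cont_and_deriv ha hb hw1 hw2 (2 * m + 1)).2 x hx
    have hsw : sw w1 w2 (2 * m + 1 + 1) x = w2 x := by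
      have h2 : (2 * m + 1 + 1) % 2 = 0 := by omega
      simp [sw, h2]
    rw [hsw] at h
    have h2 := h.const_mul (ω ^ (2 * (m + 1)) / ((2 * (m + 1))! : ℂ))
    simp only [feT, geT]
    rw [show 2 * (m + 1) - 1 = 2 * m + 1 from by omega,
        show 2 * (m + 1) = 2 * m + 1 + 1 from by omega]
    convert h2 using 1
    · rfl
    · rfl
    push_cast
    ring

lemma hasDerivAt_foT (ha : a < 0) (hb : 0 < b)
    (hw1 : ContinuousOn w1 (Set.Ioo a b)) (hw2 : ContinuousOn w2 (Set.Ioo a b))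
    (k : ℕ) {x : ℝ} (hx : x ∈ Set.Ioo a b) :
    HasDerivAt (foT w1 w2 ω k) (goT w1 w2 ω k x) x := by
  have h := (spps_cont_and_deriv ha hb hw1 hw2 (2 * k)).2 x hx
  have hsw : sw w1 w2 (2 * k + 1) x = w1 x := by
    have h2 : (2 * k + 1) % 2 = 1 := by omega
    simp [sw, h2]
  rw [hsw] at h
  have h2 := h.const_mul (ω ^ (2 * k + 1) / ((2 * k + 1)! : ℂ))
  simp only [foT, goT]
  convert h2 using 1
  · rfl
  · rfl
  push_cast
  ring

lemma norm_term_le (ha : a < 0) (hb : 0 < b)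
    (hB1 : ∀ t ∈ Set.Ioo a b, ‖w1 t‖ ≤ B) (hB2 : ∀ t ∈ Set.Ioo a b, ‖w2 t‖ ≤ B)
    (hw1 : ContinuousOn w1 (Set.Ioo a b)) (hw2 : ContinuousOn w2 (Set.Ioo a b))
    (n : ℕ) {x : ℝ} (hx : x ∈ Set.Ioo a b) :
    ‖ω ^ n / ((n)! : ℂ) * spps w1 w2 n x‖ ≤ (‖ω‖ * (B * max (-a) b)) ^ n / (n)! := by
  have hB0 : 0 ≤ B := le_trans (norm_nonneg _) (hB1 0 ⟨ha, hb⟩)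
  have hL0 : (0:ℝ) ≤ max (-a) b := le_trans hb.le (le_max_right _ _)
  have hxL : |x| ≤ max (-a) b := by
    rw [abs_le]
    constructor
    · have := le_max_left (-a) b; linarith [hx.1]
    · have := le_max_right (-a) b; linarith [hx.2]
  have h1 : ‖ω ^ n / ((n)! : ℂ) * spps w1 w2 n x‖
      = ‖ω‖ ^ n / (n)! * ‖spps w1 w2 n x‖ := by
    rw [norm_mul, norm_div, norm_pow, Complex.norm_natCast]
  rw [h1]
  calc ‖ω‖ ^ n / (n)! * ‖spps w1 w2 n x‖
      ≤ ‖ω‖ ^ n / (n)! * (B ^ n * |x| ^ n) := by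
        apply mul_le_mul_of_nonneg_left (spps_norm_le ha hb hw1 hw2 hB1 hB2 n x hx)
        positivity
    _ ≤ ‖ω‖ ^ n / (n)! * (B ^ n * (max (-a) b) ^ n) := by
        apply mul_le_mul_of_nonneg_left _ (by positivity)
        apply mul_le_mul_of_nonneg_left _ (by positivity)
        exact pow_le_pow_left₀ (abs_nonneg x) hxL n
    _ = (‖ω‖ * (B * max (-a) b)) ^ n / (n)! := by rw [mul_pow, mul_pow]; ring

lemma spps_series (ha : a < 0) (hb : 0 < b)
    (hw1 : ContinuousOn w1 (Set.Ioo a b)) (hw2 : ContinuousOn w2 (Set.Ioo a b))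
    (hB1 : ∀ t ∈ Set.Ioo a b, ‖w1 t‖ ≤ B) (hB2 : ∀ t ∈ Set.Ioo a b, ‖w2 t‖ ≤ B) :
    ∀ x ∈ Set.Ioo a b,
      HasDerivAt (fun y => ∑' k : ℕ, ω ^ (2 * k) / ((2 * k)! : ℂ) * spps w1 w2 (2 * k) y)
        (ω * w2 x * ∑' k : ℕ, ω ^ (2 * k + 1) / ((2 * k + 1)! : ℂ) * spps w1 w2 (2 * k + 1) x) x ∧
      HasDerivAt (fun y => ∑' k : ℕ, ω ^ (2 * k + 1) / ((2 * k + 1)! : ℂ) * spps w1 w2 (2 * k + 1) y)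
        (ω * w1 x * ∑' k : ℕ, ω ^ (2 * k) / ((2 * k)! : ℂ) * spps w1 w2 (2 * k) x) x := by
  intro x hx
  have hB0 : 0 ≤ B := le_trans (norm_nonneg _) (hB1 0 ⟨ha, hb⟩)
  have hL0 : (0:ℝ) ≤ max (-a) b := le_trans hb.le (le_max_right _ _)
  set r : ℝ := ‖ω‖ * (B * max (-a) b) with hrdef
  have hr0 : 0 ≤ r := by positivity
  -- bounds for the derivative terms
  have hge : ∀ k : ℕ, ∀ y ∈ Set.Ioo a b,
      ‖geT w1 w2 ω k y‖ ≤ ‖ω‖ * B * (r ^ (2 * k - 1) / (2 * k - 1)!) := by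
    intro k y hy
    cases k with
    | zero =>
      simp only [geT, Nat.mul_zero, Nat.cast_zero, zero_mul, mul_zero, norm_zero]
      positivity
    | succ m =>
      have hyL : |y| ≤ max (-a) b := by
        rw [abs_le]
        constructor
        · have := le_max_left (-a) b; linarith [hy.1]
        · have := le_max_right (-a) b; linarith [hy.2]
      have hnorm : ‖geT w1 w2 ω (m+1) y‖ =
          ‖ω‖ ^ (2 * (m+1)) / (2 * (m+1))! *
            ((2 * (m+1) : ℕ) * (‖spps w1 w2 (2 * (m+1) - 1) y‖ * ‖w2 y‖)) := by
        simp only [geT]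
        rw [norm_mul, norm_div, norm_pow, Complex.norm_natCast, norm_mul,
          Complex.norm_natCast, norm_mul]
      rw [hnorm]
      have hs := spps_norm_le ha hb hw1 hw2 hB1 hB2 (2 * (m+1) - 1) y hy
      have hsL : ‖spps w1 w2 (2 * (m+1) - 1) y‖ ≤ B ^ (2*m+1) * (max (-a) b) ^ (2*m+1) := by
        rw [show 2 * (m+1) - 1 = 2*m+1 from by omega] at hs
        refine hs.trans ?_
        apply mul_le_mul_of_nonneg_left _ (by positivity)
        exact pow_le_pow_left₀ (abs_nonneg y) hyL _
      calc ‖ω‖ ^ (2 * (m+1)) / (2 * (m+1))! *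
            ((2 * (m+1) : ℕ) * (‖spps w1 w2 (2 * (m+1) - 1) y‖ * ‖w2 y‖))
          ≤ ‖ω‖ ^ (2 * (m+1)) / (2 * (m+1))! *
            ((2 * (m+1) : ℕ) * ((B ^ (2*m+1) * (max (-a) b) ^ (2*m+1)) * B)) := by
            apply mul_le_mul_of_nonneg_left _ (by positivity)
            apply mul_le_mul_of_nonneg_left _ (by positivity)
            exact mul_le_mul hsL (hB2 y hy) (norm_nonneg _) (by positivity)
        _ = ‖ω‖ * B * (r ^ (2 * (m+1) - 1) / (2 * (m+1) - 1)!) := by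
            rw [show 2 * (m+1) - 1 = 2*m+1 from by omega,
              show 2 * (m+1) = 2*m+1+1 from by omega, Nat.factorial_succ]
            have hf1 : ((2*m+1+1)! : ℝ) ≠ 0 := by
              exact_mod_cast Nat.factorial_ne_zero _
            have hf2 : ((2*m+1)! : ℝ) ≠ 0 := by exact_mod_cast Nat.factorial_ne_zero _
            rw [hrdef]
            push_cast
            rw [mul_pow, mul_pow]
            field_simp
            ring
  have hgo : ∀ k : ℕ, ∀ y ∈ Set.Ioo a b,
      ‖goT w1 w2 ω k y‖ ≤ ‖ω‖ * B * (r ^ (2 * k) / (2 * k)!) := by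
    intro k y hy
    have hyL : |y| ≤ max (-a) b := by
      rw [abs_le]
      constructor
      · have := le_max_left (-a) b; linarith [hy.1]
      · have := le_max_right (-a) b; linarith [hy.2]
    have hnorm : ‖goT w1 w2 ω k y‖ =
        ‖ω‖ ^ (2 * k + 1) / (2 * k + 1)! *
          ((2 * k + 1 : ℕ) * (‖spps w1 w2 (2 * k) y‖ * ‖w1 y‖)) := by
      simp only [goT]
      rw [norm_mul, norm_div, norm_pow, Complex.norm_natCast, norm_mul,
        Complex.norm_natCast, norm_mul]
    rw [hnorm]
    have hs := spps_norm_le ha hb hw1 hw2 hB1 hB2 (2 * k) y hy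
    have hsL : ‖spps w1 w2 (2 * k) y‖ ≤ B ^ (2*k) * (max (-a) b) ^ (2*k) := by
      refine hs.trans ?_
      apply mul_le_mul_of_nonneg_left _ (by positivity)
      exact pow_le_pow_left₀ (abs_nonneg y) hyL _
    calc ‖ω‖ ^ (2 * k + 1) / (2 * k + 1)! *
          ((2 * k + 1 : ℕ) * (‖spps w1 w2 (2 * k) y‖ * ‖w1 y‖))
        ≤ ‖ω‖ ^ (2 * k + 1) / (2 * k + 1)! *
          ((2 * k + 1 : ℕ) * ((B ^ (2*k) * (max (-a) b) ^ (2*k)) * B)) := by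
          apply mul_le_mul_of_nonneg_left _ (by positivity)
          apply mul_le_mul_of_nonneg_left _ (by positivity)
          exact mul_le_mul hsL (hB1 y hy) (norm_nonneg _) (by positivity)
      _ = ‖ω‖ * B * (r ^ (2 * k) / (2 * k)!) := by
          rw [Nat.factorial_succ]
          have hf1 : ((2*k)! : ℝ) ≠ 0 := by exact_mod_cast Nat.factorial_ne_zero _
          rw [hrdef]
          push_cast
          rw [mul_pow, mul_pow]
          field_simp
          ring
  -- summability of the bounds
  have hsum_ge : Summable (fun k : ℕ => ‖ω‖ * B * (r ^ (2 * k - 1) / (2 * k - 1)!)) := by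
    have h := (Real.summable_pow_div_factorial r).mul_left (‖ω‖ * B)
    have hj : Function.Injective (fun k : ℕ => 2 * k - 1) := fun u v h => by
      simp only [] at h; omega
    exact h.comp_injective hj
  have hsum_go : Summable (fun k : ℕ => ‖ω‖ * B * (r ^ (2 * k) / (2 * k)!)) := by
    have h := (Real.summable_pow_div_factorial r).mul_left (‖ω‖ * B)
    have hj : Function.Injective (fun k : ℕ => 2 * k) := fun u v h => by
      simp only [] at h; omega
    exact h.comp_injective hj
  have hsum_fe_bd : Summable (fun k : ℕ => r ^ (2 * k) / (2 * k)!) := by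
    have hj : Function.Injective (fun k : ℕ => 2 * k) := fun u v h => by
      simp only [] at h; omega
    exact (Real.summable_pow_div_factorial r).comp_injective hj
  have hsum_fo_bd : Summable (fun k : ℕ => r ^ (2 * k + 1) / (2 * k + 1)!) := by
    have hj : Function.Injective (fun k : ℕ => 2 * k + 1) := fun u v h => by
      simp only [] at h; omega
    exact (Real.summable_pow_div_factorial r).comp_injective hj
  -- summability of the series themselves
  have hfe_sum : ∀ y ∈ Set.Ioo a b, Summable (fun k => feT w1 w2 ω k y) := by
    intro y hy
    exact Summable.of_norm_bounded hsum_fe_bd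
      (fun k => norm_term_le ω ha hb hB1 hB2 hw1 hw2 (2 * k) hy)
  have hfo_sum : ∀ y ∈ Set.Ioo a b, Summable (fun k => foT w1 w2 ω k y) := by
    intro y hy
    exact Summable.of_norm_bounded hsum_fo_bd
      (fun k => norm_term_le ω ha hb hB1 hB2 hw1 hw2 (2 * k + 1) hy)
  -- uniform convergence of derivative partial sums
  have hTUe : TendstoUniformlyOn (fun (s : Finset ℕ) y => ∑ k ∈ s, geT w1 w2 ω k y)
      (fun y => ∑' k, geT w1 w2 ω k y) atTop (Set.Ioo a b) :=
    tendstoUniformlyOn_tsum hsum_ge (fun k y hy => hge k y hy)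
  have hTUo : TendstoUniformlyOn (fun (s : Finset ℕ) y => ∑ k ∈ s, goT w1 w2 ω k y)
      (fun y => ∑' k, goT w1 w2 ω k y) atTop (Set.Ioo a b) :=
    tendstoUniformlyOn_tsum hsum_go (fun k y hy => hgo k y hy)
  have hDG : HasDerivAt (fun y => ∑' k, feT w1 w2 ω k y) (∑' k, geT w1 w2 ω k x) x := by
    refine hasDerivAt_of_tendstoUniformlyOn
      (f := fun (s : Finset ℕ) y => ∑ k ∈ s, feT w1 w2 ω k y) isOpen_Ioo hTUe ?_ ?_ hx
    · exact Filter.Eventually.of_forall fun s y hy =>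
        HasDerivAt.fun_sum fun k _ => hasDerivAt_feT ω ha hb hw1 hw2 k hy
    · exact fun y hy => (hfe_sum y hy).hasSum
  have hDH : HasDerivAt (fun y => ∑' k, foT w1 w2 ω k y) (∑' k, goT w1 w2 ω k x) x := by
    refine hasDerivAt_of_tendstoUniformlyOn
      (f := fun (s : Finset ℕ) y => ∑ k ∈ s, foT w1 w2 ω k y) isOpen_Ioo hTUo ?_ ?_ hx
    · exact Filter.Eventually.of_forall fun s y hy =>
        HasDerivAt.fun_sum fun k _ => hasDerivAt_foT ω ha hb hw1 hw2 k hy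
    · exact fun y hy => (hfo_sum y hy).hasSum
  -- identify the sums of the derivative series
  have hgesum : Summable (fun k => geT w1 w2 ω k x) :=
    Summable.of_norm_bounded hsum_ge (fun k => hge k x hx)
  have hkey_e : (∑' k, geT w1 w2 ω k x) = ω * w2 x * ∑' k, foT w1 w2 ω k x := by
    rw [Summable.tsum_eq_zero_add hgesum]
    have h0 : geT w1 w2 ω 0 x = 0 := by simp [geT]
    have hshift : ∀ k : ℕ, geT w1 w2 ω (k + 1) x = ω * w2 x * foT w1 w2 ω k x := by
      intro k
      simp only [geT, foT]
      rw [show 2 * (k + 1) - 1 = 2 * k + 1 from by omega,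
        show 2 * (k + 1) = 2 * k + 1 + 1 from by omega]
      have hf1 : ((2 * k + 1)! : ℂ) ≠ 0 := Nat.cast_ne_zero.mpr (Nat.factorial_ne_zero _)
      have hf2 : ((2 * k + 1 + 1 : ℕ) : ℂ) ≠ 0 := Nat.cast_ne_zero.mpr (by omega)
      have hfac : ((2 * k + 1 + 1)! : ℂ) = ((2 * k + 1 + 1 : ℕ) : ℂ) * ((2 * k + 1)! : ℂ) := by
        rw [Nat.factorial_succ]; push_cast; ring
      rw [hfac, pow_succ]
      exact shift_alg ω _ _ _ _ _ hf2 hf1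
    rw [h0, zero_add]
    simp only [hshift]
    rw [tsum_mul_left]
  have hkey_o : (∑' k, goT w1 w2 ω k x) = ω * w1 x * ∑' k, feT w1 w2 ω k x := by
    have hterm : ∀ k : ℕ, goT w1 w2 ω k x = ω * w1 x * feT w1 w2 ω k x := by
      intro k
      simp only [goT, feT]
      have hf1 : ((2 * k)! : ℂ) ≠ 0 := Nat.cast_ne_zero.mpr (Nat.factorial_ne_zero _)
      have hf2 : ((2 * k + 1 : ℕ) : ℂ) ≠ 0 := Nat.cast_ne_zero.mpr (by omega)
      have hfac : ((2 * k + 1)! : ℂ) = ((2 * k + 1 : ℕ) : ℂ) * ((2 * k)! : ℂ) := by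
        rw [Nat.factorial_succ]; push_cast; ring
      rw [hfac, pow_succ]
      exact shift_alg ω _ _ _ _ _ hf2 hf1
    simp only [hterm]
    rw [tsum_mul_left]
  rw [hkey_e] at hDG
  rw [hkey_o] at hDH
  exact ⟨hDG, hDH⟩

end series
section main

lemma main_aux {a b : ℝ} (ha : a < 0) (hb : 0 < b) (ω : ℂ) (q g0 : ℝ → ℂ)
    (hg : ContDiffOn ℝ 2 g0 (Set.Ioo a b))
    (hg0 : ∀ x ∈ Set.Ioo a b, g0 x ≠ 0)
    (heq : ∀ x ∈ Set.Ioo a b, deriv (deriv g0) x = q x * g0 x)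
    (G H Gt Ht : ℝ → ℂ)
    (hG : ∀ x ∈ Set.Ioo a b, HasDerivAt G (ω * g0 x ^ 2 * H x) x)
    (hH : ∀ x ∈ Set.Ioo a b, HasDerivAt H (ω * (g0 x ^ 2)⁻¹ * G x) x)
    (hGt : ∀ x ∈ Set.Ioo a b, HasDerivAt Gt (ω * (g0 x ^ 2)⁻¹ * Ht x) x)
    (hHt : ∀ x ∈ Set.Ioo a b, HasDerivAt Ht (ω * g0 x ^ 2 * Gt x) x)
    (u2 v2 : ℝ → ℂ) (hu2 : u2 = fun x => g0 x * H x)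
    (hv2 : v2 = fun x => deriv u2 x - deriv g0 x / g0 x * u2 x) :
    (∀ x ∈ Set.Ioo a b, v2 x = ω / g0 x * G x) ∧
    (∀ c1 c2 : ℂ, ∀ x ∈ Set.Ioo a b,
      -(deriv (deriv (fun y => c1 / g0 y * G y + c2 / g0 y * Ht y)) x) +
        ((2 * (deriv g0 x / g0 x) ^ 2 - q x) + ω ^ 2) *
          (c1 / g0 x * G x + c2 / g0 x * Ht x) = 0) := by
  have hgdiff : ∀ x ∈ Set.Ioo a b, HasDerivAt g0 (deriv g0 x) x := fun x hx =>
    ((hg.differentiableOn (by norm_num)).differentiableAt (isOpen_Ioo.mem_nhds hx)).hasDerivAt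
  have hgg : ContDiffOn ℝ 1 (deriv g0) (Set.Ioo a b) :=
    hg.deriv_of_isOpen isOpen_Ioo (by norm_num)
  have hdgdiff : ∀ x ∈ Set.Ioo a b, HasDerivAt (deriv g0) (q x * g0 x) x := fun x hx => by
    have h := ((hgg.differentiableOn (by norm_num)).differentiableAt
      (isOpen_Ioo.mem_nhds hx)).hasDerivAt
    rwa [heq x hx] at h
  constructor
  · intro x hx
    have hu2d : HasDerivAt u2
        (deriv g0 x * H x + g0 x * (ω * (g0 x ^ 2)⁻¹ * G x)) x := by
      rw [hu2]; exact (hgdiff x hx).mul (hH x hx)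
    rw [hv2]
    show deriv u2 x - deriv g0 x / g0 x * u2 x = ω / g0 x * G x
    rw [hu2d.deriv, hu2]
    show deriv g0 x * H x + g0 x * (ω * (g0 x ^ 2)⁻¹ * G x)
      - deriv g0 x / g0 x * (g0 x * H x) = ω / g0 x * G x
    field_simp [hg0 x hx]
    ring
  · intro c1 c2 x hx
    have hder : ∀ y ∈ Set.Ioo a b,
        HasDerivAt (fun y => c1 / g0 y * G y + c2 / g0 y * Ht y)
          (c1 * (ω * g0 y * H y - deriv g0 y / g0 y ^ 2 * G y)
            + c2 * (ω * g0 y * Gt y - deriv g0 y / g0 y ^ 2 * Ht y)) y := by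
      intro y hy
      have h1 := ((hasDerivAt_const y c1).fun_div (hgdiff y hy) (hg0 y hy)).fun_mul (hG y hy)
      have h2 := ((hasDerivAt_const y c2).fun_div (hgdiff y hy) (hg0 y hy)).fun_mul (hHt y hy)
      have h3 := h1.fun_add h2
      convert h3 using 1
      · rfl
      field_simp [hg0 y hy]
      ring
    have hEq : Set.EqOn (deriv (fun y => c1 / g0 y * G y + c2 / g0 y * Ht y))
        (fun y => c1 * (ω * g0 y * H y - deriv g0 y / g0 y ^ 2 * G y)
          + c2 * (ω * g0 y * Gt y - deriv g0 y / g0 y ^ 2 * Ht y)) (Set.Ioo a b) :=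
      fun y hy => (hder y hy).deriv
    have hbig : deriv (deriv (fun y => c1 / g0 y * G y + c2 / g0 y * Ht y)) x =
        deriv (fun y => c1 * (ω * g0 y * H y - deriv g0 y / g0 y ^ 2 * G y)
          + c2 * (ω * g0 y * Gt y - deriv g0 y / g0 y ^ 2 * Ht y)) x :=
      Filter.EventuallyEq.deriv_eq (Filter.eventuallyEq_of_mem (isOpen_Ioo.mem_nhds hx) hEq)
    have hp : HasDerivAt (fun y => g0 y ^ 2) (deriv g0 x * g0 x + g0 x * deriv g0 x) x := by
      have h := (hgdiff x hx).fun_mul (hgdiff x hx)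
      have hfun : (fun y => g0 y * g0 y) = fun y => g0 y ^ 2 := by funext y; ring
      rwa [hfun] at h
    have hA1 := ((hasDerivAt_const x ω).fun_mul (hgdiff x hx)).fun_mul (hH x hx)
    have hA2 := ((hdgdiff x hx).fun_div hp (pow_ne_zero 2 (hg0 x hx))).fun_mul (hG x hx)
    have hA3 := ((hasDerivAt_const x ω).fun_mul (hgdiff x hx)).fun_mul (hGt x hx)
    have hA4 := ((hdgdiff x hx).fun_div hp (pow_ne_zero 2 (hg0 x hx))).fun_mul (hHt x hx)
    have hv1d := ((hA1.fun_sub hA2).const_mul c1).fun_add ((hA3.fun_sub hA4).const_mul c2)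
    rw [hbig, hv1d.deriv]
    field_simp [hg0 x hx]
    ring

end main


/-- The Darboux transform `v₂ = u₂' - (g₀'/g₀) u₂` of
`u₂ = g₀ ∑_{odd n} ωⁿ/n! X⁽ⁿ⁾` equals `(ω/g₀) ∑_{even n} ωⁿ/n! X⁽ⁿ⁾`, and every
combination `v = (c₁/g₀) ∑_{even n} ωⁿ/n! X⁽ⁿ⁾ + (c₂/g₀) ∑_{odd n} ωⁿ/n! X̃⁽ⁿ⁾`
solves `-v'' + (r + ω²) v = 0` with `r = 2(g₀'/g₀)² - q`. -/
theorem darboux_transform_u2 (a b : ℝ) (ha : a < 0) (hb : 0 < b) (ω : ℂ)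
    (q g0 : ℝ → ℂ)
    (hq : ContinuousOn q (Set.Ioo a b))
    (hg : ContDiffOn ℝ 2 g0 (Set.Ioo a b))
    (hg0 : ∀ x ∈ Set.Ioo a b, g0 x ≠ 0)
    (heq : ∀ x ∈ Set.Ioo a b, deriv (deriv g0) x = q x * g0 x)
    (hbd : ∃ M : ℝ, ∀ x ∈ Set.Ioo a b, ‖g0 x‖ ≤ M ∧ ‖(g0 x)⁻¹‖ ≤ M)
    (u2 v2 : ℝ → ℂ)
    (hu2 : u2 = fun x => g0 x * ∑' k : ℕ,
      ω ^ (2 * k + 1) / ((2 * k + 1)! : ℂ) *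
        spps (fun t => (g0 t ^ 2)⁻¹) (fun t => g0 t ^ 2) (2 * k + 1) x)
    (hv2 : v2 = fun x => deriv u2 x - deriv g0 x / g0 x * u2 x) :
    (∀ x ∈ Set.Ioo a b,
      v2 x = ω / g0 x * ∑' k : ℕ,
        ω ^ (2 * k) / ((2 * k)! : ℂ) *
          spps (fun t => (g0 t ^ 2)⁻¹) (fun t => g0 t ^ 2) (2 * k) x) ∧
    (∀ c1 c2 : ℂ, ∀ x ∈ Set.Ioo a b,
      -(deriv (deriv (fun y =>
          c1 / g0 y * ∑' k : ℕ, ω ^ (2 * k) / ((2 * k)! : ℂ) *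
            spps (fun t => (g0 t ^ 2)⁻¹) (fun t => g0 t ^ 2) (2 * k) y +
          c2 / g0 y * ∑' k : ℕ, ω ^ (2 * k + 1) / ((2 * k + 1)! : ℂ) *
            spps (fun t => g0 t ^ 2) (fun t => (g0 t ^ 2)⁻¹) (2 * k + 1) y)) x) +
        ((2 * (deriv g0 x / g0 x) ^ 2 - q x) + ω ^ 2) *
          (c1 / g0 x * ∑' k : ℕ, ω ^ (2 * k) / ((2 * k)! : ℂ) *
            spps (fun t => (g0 t ^ 2)⁻¹) (fun t => g0 t ^ 2) (2 * k) x +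
           c2 / g0 x * ∑' k : ℕ, ω ^ (2 * k + 1) / ((2 * k + 1)! : ℂ) *
            spps (fun t => g0 t ^ 2) (fun t => (g0 t ^ 2)⁻¹) (2 * k + 1) x) = 0) := by
  obtain ⟨M, hM⟩ := hbd
  have hgc : ContinuousOn g0 (Set.Ioo a b) := hg.continuousOn
  have hw2c : ContinuousOn (fun t => g0 t ^ 2) (Set.Ioo a b) := hgc.pow 2
  have hw1c : ContinuousOn (fun t => (g0 t ^ 2)⁻¹) (Set.Ioo a b) :=
    hw2c.inv₀ (fun t ht => pow_ne_zero 2 (hg0 t ht))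
  have hb2 : ∀ t ∈ Set.Ioo a b, ‖g0 t ^ 2‖ ≤ M ^ 2 := by
    intro t ht
    rw [norm_pow]
    exact pow_le_pow_left₀ (norm_nonneg _) (hM t ht).1 2
  have hb1 : ∀ t ∈ Set.Ioo a b, ‖(g0 t ^ 2)⁻¹‖ ≤ M ^ 2 := by
    intro t ht
    rw [← inv_pow, norm_pow]
    exact pow_le_pow_left₀ (norm_nonneg _) (hM t ht).2 2
  have hA := spps_series (w1 := fun t => (g0 t ^ 2)⁻¹) (w2 := fun t => g0 t ^ 2)
    (B := M ^ 2) ω ha hb hw1c hw2c hb1 hb2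
  have hBt := spps_series (w1 := fun t => g0 t ^ 2) (w2 := fun t => (g0 t ^ 2)⁻¹)
    (B := M ^ 2) ω ha hb hw2c hw1c hb2 hb1
  exact main_aux ha hb ω q g0 hg hg0 heq
    (fun y => ∑' k : ℕ, ω ^ (2 * k) / ((2 * k)! : ℂ) *
      spps (fun t => (g0 t ^ 2)⁻¹) (fun t => g0 t ^ 2) (2 * k) y)
    (fun y => ∑' k : ℕ, ω ^ (2 * k + 1) / ((2 * k + 1)! : ℂ) *
      spps (fun t => (g0 t ^ 2)⁻¹) (fun t => g0 t ^ 2) (2 * k + 1) y)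
    (fun y => ∑' k : ℕ, ω ^ (2 * k) / ((2 * k)! : ℂ) *
      spps (fun t => g0 t ^ 2) (fun t => (g0 t ^ 2)⁻¹) (2 * k) y)
    (fun y => ∑' k : ℕ, ω ^ (2 * k + 1) / ((2 * k + 1)! : ℂ) *
      spps (fun t => g0 t ^ 2) (fun t => (g0 t ^ 2)⁻¹) (2 * k + 1) y)
    (fun x hx => (hA x hx).1) (fun x hx => (hA x hx).2)
    (fun x hx => (hBt x hx).1) (fun x hx => (hBt x hx).2)
    u2 v2 hu2 hv2
end

section
/- Let $f$ be a nonvanishing real-valued $C^2$ function on a domain $\Omega \subset \mathbb{R}^2$ and let $W = W_1 + i W_2$ (with $W_1, W_2$ real) be a $C^2$ solution of the main Vekua equation $\partial_{\bar z} W = \frac{\partial_{\bar z} f}{f} \overline{W}$ on $\Omega$. Then $W_1$ satisfies the Schrödinger equation $-\Delta W_1 + \frac{\Delta f}{f} W_1 = 0$ and $W_2$ satisfies $-\Delta W_2 + \big( \frac{2|\nabla f|^2}{f^2} - \frac{\Delta f}{f} \big) W_2 = 0$ on $\Omega$. -/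
private lemma slice1 {g : ℝ × ℝ → ℝ} {x y : ℝ} (hg : DifferentiableAt ℝ g (x, y)) :
    HasDerivAt (fun t => g (t, y)) (fderiv ℝ g (x, y) (1, 0)) x := by
  have h := hg.hasFDerivAt.comp_hasDerivAt x ((hasDerivAt_id x).prodMk (hasDerivAt_const x y))
  exact h

private lemma slice2 {g : ℝ × ℝ → ℝ} {x y : ℝ} (hg : DifferentiableAt ℝ g (x, y)) :
    HasDerivAt (fun t => g (x, t)) (fderiv ℝ g (x, y) (0, 1)) y := by
  have h := hg.hasFDerivAt.comp_hasDerivAt y ((hasDerivAt_const y x).prodMk (hasDerivAt_id y))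
  exact h

private lemma Dv {g : ℝ × ℝ → ℝ} {p : ℝ × ℝ} (hg : ContDiffAt ℝ 2 g p) (v : ℝ × ℝ) :
    HasFDerivAt (fun q => fderiv ℝ g q v)
      ((ContinuousLinearMap.apply ℝ ℝ v).comp (fderiv ℝ (fderiv ℝ g) p)) p := by
  have h1 : ContDiffAt ℝ 1 (fderiv ℝ g) p := hg.fderiv_right (by norm_num)
  exact (ContinuousLinearMap.apply ℝ ℝ v).hasFDerivAt.comp p
    (h1.differentiableAt one_ne_zero).hasFDerivAt

private lemma sym2 {g : ℝ × ℝ → ℝ} {p : ℝ × ℝ} (hg : ContDiffAt ℝ 2 g p) (v w : ℝ × ℝ) :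
    fderiv ℝ (fderiv ℝ g) p v w = fderiv ℝ (fderiv ℝ g) p w v :=
  (hg.isSymmSndFDerivAt (by norm_num)) v w

private lemma sliceD11 {Ω : Set (ℝ × ℝ)} (hΩ : IsOpen Ω) {g : ℝ × ℝ → ℝ}
    (hg : ContDiffOn ℝ 2 g Ω) {x y : ℝ} (hp : (x, y) ∈ Ω) :
    deriv (fun t => deriv (fun s => g (s, y)) t) x
      = fderiv ℝ (fderiv ℝ g) (x, y) (1, 0) (1, 0) := by
  have hg2 : ContDiffAt ℝ 2 g (x, y) := hg.contDiffAt (hΩ.mem_nhds hp)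
  have hop : ∀ᶠ t in nhds x, (t, y) ∈ Ω :=
    (Continuous.continuousAt (by continuity)).preimage_mem_nhds (hΩ.mem_nhds hp)
  have ev : (fun t => deriv (fun s => g (s, y)) t) =ᶠ[nhds x]
      (fun t => fderiv ℝ g (t, y) (1, 0)) := by
    filter_upwards [hop] with t ht
    exact (slice1 ((hg.contDiffAt (hΩ.mem_nhds ht)).differentiableAt two_ne_zero)).deriv
  rw [ev.deriv_eq]
  have h := (slice1 (Dv hg2 (1, 0)).differentiableAt).deriv
  rw [(Dv hg2 (1, 0)).fderiv] at h
  exact h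

private lemma sliceD22 {Ω : Set (ℝ × ℝ)} (hΩ : IsOpen Ω) {g : ℝ × ℝ → ℝ}
    (hg : ContDiffOn ℝ 2 g Ω) {x y : ℝ} (hp : (x, y) ∈ Ω) :
    deriv (fun t => deriv (fun s => g (x, s)) t) y
      = fderiv ℝ (fderiv ℝ g) (x, y) (0, 1) (0, 1) := by
  have hg2 : ContDiffAt ℝ 2 g (x, y) := hg.contDiffAt (hΩ.mem_nhds hp)
  have hop : ∀ᶠ t in nhds y, (x, t) ∈ Ω :=
    (Continuous.continuousAt (by continuity)).preimage_mem_nhds (hΩ.mem_nhds hp)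
  have ev : (fun t => deriv (fun s => g (x, s)) t) =ᶠ[nhds y]
      (fun t => fderiv ℝ g (x, t) (0, 1)) := by
    filter_upwards [hop] with t ht
    exact (slice2 ((hg.contDiffAt (hΩ.mem_nhds ht)).differentiableAt two_ne_zero)).deriv
  rw [ev.deriv_eq]
  have h := (slice2 (Dv hg2 (0, 1)).differentiableAt).deriv
  rw [(Dv hg2 (0, 1)).fderiv] at h
  exact h

private lemma key {Ω : Set (ℝ × ℝ)} (hΩ : IsOpen Ω) {F U V : ℝ × ℝ → ℝ}
    (hF : ContDiffOn ℝ 2 F Ω) (hU : ContDiffOn ℝ 2 U Ω) (hV : ContDiffOn ℝ 2 V Ω)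
    (hA : ∀ q ∈ Ω, F q * (fderiv ℝ U q (1,0) - fderiv ℝ V q (0,1))
        = fderiv ℝ F q (1,0) * U q + fderiv ℝ F q (0,1) * V q)
    (hB : ∀ q ∈ Ω, F q * (fderiv ℝ U q (0,1) + fderiv ℝ V q (1,0))
        = fderiv ℝ F q (0,1) * U q - fderiv ℝ F q (1,0) * V q)
    {p : ℝ × ℝ} (hp : p ∈ Ω) :
    F p * (fderiv ℝ (fderiv ℝ U) p (1,0) (1,0) + fderiv ℝ (fderiv ℝ U) p (0,1) (0,1))
      = (fderiv ℝ (fderiv ℝ F) p (1,0) (1,0) + fderiv ℝ (fderiv ℝ F) p (0,1) (0,1)) * U p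
    ∧ F p * F p * (fderiv ℝ (fderiv ℝ V) p (1,0) (1,0) + fderiv ℝ (fderiv ℝ V) p (0,1) (0,1))
      = 2 * ((fderiv ℝ F p (1,0))^2 + (fderiv ℝ F p (0,1))^2) * V p
        - F p * (fderiv ℝ (fderiv ℝ F) p (1,0) (1,0) + fderiv ℝ (fderiv ℝ F) p (0,1) (0,1)) * V p := by
  have hF2 : ContDiffAt ℝ 2 F p := hF.contDiffAt (hΩ.mem_nhds hp)
  have hU2 : ContDiffAt ℝ 2 U p := hU.contDiffAt (hΩ.mem_nhds hp)
  have hV2 : ContDiffAt ℝ 2 V p := hV.contDiffAt (hΩ.mem_nhds hp)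
  have hFd : DifferentiableAt ℝ F p := hF2.differentiableAt two_ne_zero
  have hUd : DifferentiableAt ℝ U p := hU2.differentiableAt two_ne_zero
  have hVd : DifferentiableAt ℝ V p := hV2.differentiableAt two_ne_zero
  have hDF1 := Dv hF2 (1,0); have hDF2 := Dv hF2 (0,1)
  have hDU1 := Dv hU2 (1,0); have hDU2 := Dv hU2 (0,1)
  have hDV1 := Dv hV2 (1,0); have hDV2 := Dv hV2 (0,1)
  have hA0 : (fun q => F q * (fderiv ℝ U q (1,0) - fderiv ℝ V q (0,1))
      - (fderiv ℝ F q (1,0) * U q + fderiv ℝ F q (0,1) * V q)) =ᶠ[nhds p] (fun _ => (0:ℝ)) := by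
    filter_upwards [hΩ.mem_nhds hp] with q hq
    rw [hA q hq, sub_self]
  have hB0 : (fun q => F q * (fderiv ℝ U q (0,1) + fderiv ℝ V q (1,0))
      - (fderiv ℝ F q (0,1) * U q - fderiv ℝ F q (1,0) * V q)) =ᶠ[nhds p] (fun _ => (0:ℝ)) := by
    filter_upwards [hΩ.mem_nhds hp] with q hq
    rw [hB q hq, sub_self]
  have hΦA := (hFd.hasFDerivAt.mul (hDU1.sub hDV2)).sub
    ((hDF1.mul hUd.hasFDerivAt).add (hDF2.mul hVd.hasFDerivAt))
  have hΦB := (hFd.hasFDerivAt.mul (hDU2.add hDV1)).sub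
    ((hDF2.mul hUd.hasFDerivAt).sub (hDF1.mul hVd.hasFDerivAt))
  have hzA : _ = (0 : (ℝ × ℝ) →L[ℝ] ℝ) := hΦA.fderiv.symm.trans
    (hA0.fderiv_eq.trans (fderiv_const_apply 0))
  have hzB : _ = (0 : (ℝ × ℝ) →L[ℝ] ℝ) := hΦB.fderiv.symm.trans
    (hB0.fderiv_eq.trans (fderiv_const_apply 0))
  have eA1 := congrArg (fun L : (ℝ × ℝ) →L[ℝ] ℝ => L (1,0)) hzA
  have eA2 := congrArg (fun L : (ℝ × ℝ) →L[ℝ] ℝ => L (0,1)) hzA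
  have eB1 := congrArg (fun L : (ℝ × ℝ) →L[ℝ] ℝ => L (1,0)) hzB
  have eB2 := congrArg (fun L : (ℝ × ℝ) →L[ℝ] ℝ => L (0,1)) hzB
  simp only [ContinuousLinearMap.add_apply, ContinuousLinearMap.sub_apply,
    ContinuousLinearMap.smul_apply, ContinuousLinearMap.comp_apply,
    ContinuousLinearMap.apply_apply, ContinuousLinearMap.zero_apply, smul_eq_mul,
    Pi.add_apply, Pi.sub_apply]
    at eA1 eA2 eB1 eB2
  rw [sym2 hU2 (0,1) (1,0), sym2 hF2 (0,1) (1,0)] at eA2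
  rw [sym2 hV2 (0,1) (1,0), sym2 hF2 (0,1) (1,0)] at eB2
  constructor
  · linear_combination eA1 + eB2
  · linear_combination F p * eB1 - F p * eA2 + 2 * fderiv ℝ F p (0,1) * hA p hp
      - 2 * fderiv ℝ F p (1,0) * hB p hp

/-- Real and imaginary parts of a solution of the main Vekua equation
`∂_z̄ W = (∂_z̄ f / f) conj W` solve the Schrödinger equations with potentials
`Δf/f` and `2|∇f|²/f² - Δf/f` respectively. -/
theorem vekua_to_schrodinger (Ω : Set (ℝ × ℝ)) (hΩ : IsOpen Ω)
    (f W1 W2 : ℝ → ℝ → ℝ)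
    (hf : ContDiffOn ℝ 2 (fun p : ℝ × ℝ => f p.1 p.2) Ω)
    (hf0 : ∀ x y, (x, y) ∈ Ω → f x y ≠ 0)
    (hW1 : ContDiffOn ℝ 2 (fun p : ℝ × ℝ => W1 p.1 p.2) Ω)
    (hW2 : ContDiffOn ℝ 2 (fun p : ℝ × ℝ => W2 p.1 p.2) Ω)
    (hVekua : ∀ x y, (x, y) ∈ Ω →
      (1 / 2 : ℂ) * (deriv (fun t => (W1 t y : ℂ) + Complex.I * W2 t y) x +
          Complex.I * deriv (fun t => (W1 x t : ℂ) + Complex.I * W2 x t) y) =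
        ((1 / 2 : ℂ) * (deriv (fun t => (f t y : ℂ)) x +
            Complex.I * deriv (fun t => (f x t : ℂ)) y) / (f x y : ℂ)) *
          starRingEnd ℂ ((W1 x y : ℂ) + Complex.I * W2 x y)) :
    ∀ x y, (x, y) ∈ Ω →
      (-(deriv (fun t => deriv (fun s => W1 s y) t) x +
          deriv (fun t => deriv (fun s => W1 x s) t) y) +
        ((deriv (fun t => deriv (fun s => f s y) t) x +
          deriv (fun t => deriv (fun s => f x s) t) y) / f x y) * W1 x y = 0) ∧
      (-(deriv (fun t => deriv (fun s => W2 s y) t) x +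
          deriv (fun t => deriv (fun s => W2 x s) t) y) +
        (2 * ((deriv (fun s => f s y) x) ^ 2 + (deriv (fun s => f x s) y) ^ 2) /
            (f x y) ^ 2 -
          (deriv (fun t => deriv (fun s => f s y) t) x +
            deriv (fun t => deriv (fun s => f x s) t) y) / f x y) * W2 x y = 0) := by
  set F : ℝ × ℝ → ℝ := fun p => f p.1 p.2 with hFdef
  set U : ℝ × ℝ → ℝ := fun p => W1 p.1 p.2 with hUdef
  set V : ℝ × ℝ → ℝ := fun p => W2 p.1 p.2 with hVdef
  have hAB : ∀ q ∈ Ω,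
      F q * (fderiv ℝ U q (1,0) - fderiv ℝ V q (0,1))
        = fderiv ℝ F q (1,0) * U q + fderiv ℝ F q (0,1) * V q
      ∧ F q * (fderiv ℝ U q (0,1) + fderiv ℝ V q (1,0))
        = fderiv ℝ F q (0,1) * U q - fderiv ℝ F q (1,0) * V q := by
    rintro ⟨qx, qy⟩ hq
    have hFq : DifferentiableAt ℝ F (qx, qy) :=
      (hf.contDiffAt (hΩ.mem_nhds hq)).differentiableAt two_ne_zero
    have hUq : DifferentiableAt ℝ U (qx, qy) :=
      (hW1.contDiffAt (hΩ.mem_nhds hq)).differentiableAt two_ne_zero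
    have hVq : DifferentiableAt ℝ V (qx, qy) :=
      (hW2.contDiffAt (hΩ.mem_nhds hq)).differentiableAt two_ne_zero
    have h := hVekua qx qy hq
    have d1 : deriv (fun t => (W1 t qy : ℂ) + Complex.I * W2 t qy) qx
        = ((fderiv ℝ U (qx, qy) (1,0) : ℝ) : ℂ)
          + Complex.I * ((fderiv ℝ V (qx, qy) (1,0) : ℝ) : ℂ) :=
      (((slice1 hUq).ofReal_comp).add (((slice1 hVq).ofReal_comp).const_mul Complex.I)).deriv
    have d2 : deriv (fun t => (W1 qx t : ℂ) + Complex.I * W2 qx t) qy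
        = ((fderiv ℝ U (qx, qy) (0,1) : ℝ) : ℂ)
          + Complex.I * ((fderiv ℝ V (qx, qy) (0,1) : ℝ) : ℂ) :=
      (((slice2 hUq).ofReal_comp).add (((slice2 hVq).ofReal_comp).const_mul Complex.I)).deriv
    have df1 : deriv (fun t => (f t qy : ℂ)) qx = ((fderiv ℝ F (qx, qy) (1,0) : ℝ) : ℂ) :=
      ((slice1 hFq).ofReal_comp).deriv
    have df2 : deriv (fun t => (f qx t : ℂ)) qy = ((fderiv ℝ F (qx, qy) (0,1) : ℝ) : ℂ) :=
      ((slice2 hFq).ofReal_comp).deriv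
    rw [d1, d2, df1, df2] at h
    have hr : F (qx, qy) ≠ 0 := hf0 qx qy hq
    have hrC : ((F (qx, qy) : ℝ) : ℂ) ≠ 0 := Complex.ofReal_ne_zero.mpr hr
    have hu : ((W1 qx qy : ℝ) : ℂ) = ((U (qx, qy) : ℝ) : ℂ) := rfl
    have hv : ((W2 qx qy : ℝ) : ℂ) = ((V (qx, qy) : ℝ) : ℂ) := rfl
    have hw : ((f qx qy : ℝ) : ℂ) = ((F (qx, qy) : ℝ) : ℂ) := rfl
    rw [hu, hv, hw] at h
    field_simp at h
    rw [Complex.ext_iff] at h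
    obtain ⟨h1, h2⟩ := h
    simp [Complex.mul_re, Complex.mul_im, Complex.add_re, Complex.add_im, Complex.I_re,
      Complex.I_im, Complex.ofReal_re, Complex.ofReal_im, Complex.conj_re, Complex.conj_im]
      at h1 h2
    constructor <;> linarith
  intro x y hxy
  have hk := key hΩ hf hW1 hW2 (fun q hq => (hAB q hq).1) (fun q hq => (hAB q hq).2) hxy
  have e1 : deriv (fun t => deriv (fun s => W1 s y) t) x
      = fderiv ℝ (fderiv ℝ U) (x, y) (1,0) (1,0) := sliceD11 hΩ hW1 hxy
  have e2 : deriv (fun t => deriv (fun s => W1 x s) t) y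
      = fderiv ℝ (fderiv ℝ U) (x, y) (0,1) (0,1) := sliceD22 hΩ hW1 hxy
  have e3 : deriv (fun t => deriv (fun s => W2 s y) t) x
      = fderiv ℝ (fderiv ℝ V) (x, y) (1,0) (1,0) := sliceD11 hΩ hW2 hxy
  have e4 : deriv (fun t => deriv (fun s => W2 x s) t) y
      = fderiv ℝ (fderiv ℝ V) (x, y) (0,1) (0,1) := sliceD22 hΩ hW2 hxy
  have e5 : deriv (fun t => deriv (fun s => f s y) t) x
      = fderiv ℝ (fderiv ℝ F) (x, y) (1,0) (1,0) := sliceD11 hΩ hf hxy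
  have e6 : deriv (fun t => deriv (fun s => f x s) t) y
      = fderiv ℝ (fderiv ℝ F) (x, y) (0,1) (0,1) := sliceD22 hΩ hf hxy
  have hFd : DifferentiableAt ℝ F (x, y) :=
    (hf.contDiffAt (hΩ.mem_nhds hxy)).differentiableAt two_ne_zero
  have g1 : deriv (fun s => f s y) x = fderiv ℝ F (x, y) (1,0) := (slice1 hFd).deriv
  have g2 : deriv (fun s => f x s) y = fderiv ℝ F (x, y) (0,1) := (slice2 hFd).deriv
  have hr : F (x, y) ≠ 0 := hf0 x y hxy
  have hux : W1 x y = U (x, y) := rfl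
  have hvx : W2 x y = V (x, y) := rfl
  have hfx : f x y = F (x, y) := rfl
  rw [e1, e2, e3, e4, e5, e6, g1, g2, hux, hvx, hfx]
  obtain ⟨k1, k2⟩ := hk
  constructor
  · field_simp
    linear_combination -k1
  · field_simp
    linear_combination -k2
end
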